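/- Let G be a finite simple graph with no isolated vertices that is (C3, C6)-free (i.e., contains no induced triangle and no induced 6-cycle). Then γt(G) = 2γ(G) if and only if sup(G), the set of support vertices of G, is both a packing and a dominating set of G. -/

import Mathlib

open SimpleGraph

namespace TotalDom

variable {V : Type*}

/-- The closed neighborhood `N[v]` of a vertex. -/
def cnbr (G : SimpleGraph V) (v : V) : Set V := insert v (G.neighborSet v)

/-- `S` is a dominating set: every vertex outside `S` has a neighbor in `S`. -/
def IsDomSet (G : SimpleGraph V) (S : Set V) : Prop := ∀ v ∉ S, ∃ u ∈ S, G.Adj u v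

/-- `S` is a total dominating set: every vertex has a neighbor in `S`. -/
def IsTotalDomSet (G : SimpleGraph V) (S : Set V) : Prop := ∀ v : V, ∃ u ∈ S, G.Adj u v

/-- The domination number `γ(G)`. -/
noncomputable def domNum (G : SimpleGraph V) : ℕ :=
  sInf {n | ∃ S : Set V, IsDomSet G S ∧ S.ncard = n}

/-- The total domination number `γₜ(G)`. -/
noncomputable def totalDomNum (G : SimpleGraph V) : ℕ :=
  sInf {n | ∃ S : Set V, IsTotalDomSet G S ∧ S.ncard = n}

/-- A minimum dominating set (γ-set). -/
def IsMinDomSet (G : SimpleGraph V) (S : Set V) : Prop := IsDomSet G S ∧ S.ncard = domNum G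

/-- `S` is a packing: closed neighborhoods of distinct members are disjoint. -/
def IsPacking (G : SimpleGraph V) (S : Set V) : Prop :=
  S.Pairwise fun u v => Disjoint (cnbr G u) (cnbr G v)

/-- `M(v)`: neighbors of `v` having a neighbor outside `N[v]`. -/
def Mset (G : SimpleGraph V) (v : V) : Set V :=
  {u | G.Adj v u ∧ ∃ w, G.Adj u w ∧ w ∉ cnbr G v}

/-- `D(v)`: neighbors `u` of `v` that are not true twins of `v` with `N[u] ⊆ N[v]`. -/
def Dset (G : SimpleGraph V) (v : V) : Set V :=
  {u | G.Adj v u ∧ cnbr G u ≠ cnbr G v ∧ cnbr G u ⊆ cnbr G v}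

/-- `T(v)`: `v` together with its true twins. -/
def Tset (G : SimpleGraph V) (v : V) : Set V := {u | cnbr G u = cnbr G v}

/-- A non-isolated vertex `v` is special if no `u ∈ M(v)` satisfies `D(v) ⊆ N(u)`. -/
def Special (G : SimpleGraph V) (v : V) : Prop :=
  (G.neighborSet v).Nonempty ∧ ¬ ∃ u ∈ Mset G v, Dset G v ⊆ G.neighborSet u

/-- An `S(G)`-set: a set of special vertices containing exactly one vertex from each
true-twin equivalence class of special vertices. -/
def IsSGSet (G : SimpleGraph V) (S : Set V) : Prop :=
  (∀ u ∈ S, Special G u) ∧ ∀ v, Special G v → ∃! u, u ∈ S ∧ u ∈ Tset G v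

/-- `G` has no isolated vertices. -/
def NoIsolated (G : SimpleGraph V) : Prop := ∀ v : V, ∃ u, G.Adj v u

/-- `G` contains no induced copy of `H`. -/
def Free {α : Type*} (H : SimpleGraph α) (G : SimpleGraph V) : Prop := IsEmpty (H ↪g G)

/-- `H₁`: a 6-cycle plus one chord between vertices at distance two along the cycle. -/
def H1 : SimpleGraph (Fin 6) := cycleGraph 6 ⊔ fromEdgeSet {s(0, 2)}

/-- `H₂`: a 6-cycle `x₁x₂x₃x₄x₅x₆` plus the chords `x₂x₆` and `x₃x₅`. -/
def H2 : SimpleGraph (Fin 6) := cycleGraph 6 ⊔ fromEdgeSet {s(1, 5), s(2, 4)}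

/-- A leaf: a vertex of degree one. -/
def IsLeaf (G : SimpleGraph V) (v : V) : Prop := ∃! u, G.Adj v u

/-- A support vertex: a vertex adjacent to a leaf. -/
def IsSupport (G : SimpleGraph V) (v : V) : Prop := ∃ u, G.Adj v u ∧ IsLeaf G u

/-- `sup(G)`: the set of support vertices. -/
def supSet (G : SimpleGraph V) : Set V := {v | IsSupport G v}

/-- `S` is the set of support vertices of `G`, using the convention that in a `K₂` component
exactly one of the two vertices is regarded as the support vertex (the other as the leaf):
every member of `S` is a support vertex, every support vertex that is not itself a leaf
belongs to `S`, and of two adjacent leaves exactly one belongs to `S`. -/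
def IsSupportChoice (G : SimpleGraph V) (S : Set V) : Prop :=
  (∀ v ∈ S, IsSupport G v) ∧
  (∀ v, IsSupport G v → ¬ IsLeaf G v → v ∈ S) ∧
  (∀ v u, G.Adj v u → IsLeaf G u → IsLeaf G v → (v ∈ S ↔ u ∉ S))


/-! ### Auxiliary lemmas -/

section Aux

variable {V : Type*} {G : SimpleGraph V}

lemma mem_cnbr {v x : V} : x ∈ cnbr G v ↔ x = v ∨ G.Adj v x := by
  simp [cnbr]

lemma self_mem_cnbr (G : SimpleGraph V) (v : V) : v ∈ cnbr G v := by simp [cnbr]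

lemma mem_cnbr_of_adj {v x : V} (h : G.Adj v x) : x ∈ cnbr G v :=
  mem_cnbr.mpr (Or.inr h)

/-- Extract a triangle contradiction from `C₃`-freeness. -/
lemma triFree (hC3 : Free (cycleGraph 3) G) {a b c : V}
    (hab : G.Adj a b) (hbc : G.Adj b c) (hac : G.Adj a c) : False := by
  have hab' := hab.ne; have hbc' := hbc.ne; have hac' := hac.ne
  have hba := hab.symm; have hcb := hbc.symm; have hca := hac.symm
  refine hC3.elim ⟨⟨![a,b,c], ?_⟩, ?_⟩
  · intro i j hij
    fin_cases i <;> fin_cases j <;> simp_all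
  · intro i j
    change G.Adj (![a,b,c] i) (![a,b,c] j) ↔ _
    fin_cases i <;> fin_cases j <;>
      simp_all [cycleGraph_adj] <;> decide

private def pick6 (x0 x1 x2 x3 x4 x5 : V) : Fin 6 → V
  | 0 => x0 | 1 => x1 | 2 => x2 | 3 => x3 | 4 => x4 | 5 => x5

set_option maxRecDepth 8000 in
/-- Extract an induced-6-cycle contradiction from `C₆`-freeness. -/
lemma c6Free (hC6 : Free (cycleGraph 6) G) {x0 x1 x2 x3 x4 x5 : V}
    (a01 : G.Adj x0 x1) (a12 : G.Adj x1 x2) (a23 : G.Adj x2 x3)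
    (a34 : G.Adj x3 x4) (a45 : G.Adj x4 x5) (a50 : G.Adj x5 x0)
    (n02 : ¬G.Adj x0 x2) (n03 : ¬G.Adj x0 x3) (n04 : ¬G.Adj x0 x4)
    (n13 : ¬G.Adj x1 x3) (n14 : ¬G.Adj x1 x4) (n15 : ¬G.Adj x1 x5)
    (n24 : ¬G.Adj x2 x4) (n25 : ¬G.Adj x2 x5) (n35 : ¬G.Adj x3 x5)
    (d02 : x0 ≠ x2) (d03 : x0 ≠ x3) (d04 : x0 ≠ x4)
    (d13 : x1 ≠ x3) (d14 : x1 ≠ x4) (d15 : x1 ≠ x5)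
    (d24 : x2 ≠ x4) (d25 : x2 ≠ x5) (d35 : x3 ≠ x5) : False := by
  have e01 := a01.ne; have e12 := a12.ne; have e23 := a23.ne
  have e34 := a34.ne; have e45 := a45.ne; have e50 := a50.ne
  have s01 := a01.symm; have s12 := a12.symm; have s23 := a23.symm
  have s34 := a34.symm; have s45 := a45.symm; have s50 := a50.symm
  have m02 : ¬G.Adj x2 x0 := fun h => n02 h.symm
  have m03 : ¬G.Adj x3 x0 := fun h => n03 h.symm
  have m04 : ¬G.Adj x4 x0 := fun h => n04 h.symm
  have m13 : ¬G.Adj x3 x1 := fun h => n13 h.symm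
  have m14 : ¬G.Adj x4 x1 := fun h => n14 h.symm
  have m15 : ¬G.Adj x5 x1 := fun h => n15 h.symm
  have m24 : ¬G.Adj x4 x2 := fun h => n24 h.symm
  have m25 : ¬G.Adj x5 x2 := fun h => n25 h.symm
  have m35 : ¬G.Adj x5 x3 := fun h => n35 h.symm
  refine hC6.elim ⟨⟨pick6 x0 x1 x2 x3 x4 x5, ?_⟩, ?_⟩
  · intro i j hij
    fin_cases i <;> fin_cases j <;> simp_all [pick6]
  · intro i j
    change G.Adj (pick6 x0 x1 x2 x3 x4 x5 i) (pick6 x0 x1 x2 x3 x4 x5 j) ↔ _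
    fin_cases i <;> fin_cases j <;>
      simp_all [pick6, cycleGraph_adj] <;> decide

lemma exists_minDomSet (G : SimpleGraph V) :
    ∃ D : Set V, IsDomSet G D ∧ D.ncard = domNum G := by
  have hne : {n | ∃ A : Set V, IsDomSet G A ∧ A.ncard = n}.Nonempty :=
    ⟨Set.univ.ncard, Set.univ, fun v hv => absurd (Set.mem_univ v) hv, rfl⟩
  exact Nat.sInf_mem hne

lemma domNum_le {A : Set V} (hA : IsDomSet G A) : domNum G ≤ A.ncard :=
  Nat.sInf_le ⟨A, hA, rfl⟩

lemma totalDomNum_le {A : Set V} (hA : IsTotalDomSet G A) : totalDomNum G ≤ A.ncard :=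
  Nat.sInf_le ⟨A, hA, rfl⟩

lemma le_totalDomNum (hiso : NoIsolated G) {m : ℕ}
    (h : ∀ A : Set V, IsTotalDomSet G A → m ≤ A.ncard) : m ≤ totalDomNum G := by
  have hne : {n | ∃ A : Set V, IsTotalDomSet G A ∧ A.ncard = n}.Nonempty := by
    refine ⟨Set.univ.ncard, Set.univ, fun v => ?_, rfl⟩
    obtain ⟨u, hu⟩ := hiso v
    exact ⟨u, Set.mem_univ u, hu.symm⟩
  obtain ⟨A, hA, hcard⟩ := Nat.sInf_mem hne
  calc m ≤ A.ncard := h A hA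
    _ = totalDomNum G := hcard

lemma exists_dominator {D : Set V} (hD : IsDomSet G D) (y : V) :
    ∃ v ∈ D, y ∈ cnbr G v := by
  by_cases hy : y ∈ D
  · exact ⟨y, hy, self_mem_cnbr G y⟩
  · obtain ⟨u, huD, hu⟩ := hD y hy
    exact ⟨u, huD, mem_cnbr_of_adj hu⟩

lemma packing_le_dom [Fintype V] {P D : Set V} (hP : IsPacking G P) (hD : IsDomSet G D) :
    P.ncard ≤ D.ncard := by
  classical
  have hg : ∀ p : V, ∃ q, q ∈ D ∧ q ∈ cnbr G p := by
    intro p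
    by_cases hp : p ∈ D
    · exact ⟨p, hp, self_mem_cnbr G p⟩
    · obtain ⟨u, huD, hu⟩ := hD p hp
      exact ⟨u, huD, mem_cnbr_of_adj hu.symm⟩
  choose g hg1 hg2 using hg
  refine Set.ncard_le_ncard_of_injOn g (fun p _ => hg1 p) ?_ D.toFinite
  intro p1 h1 p2 h2 he
  by_contra hne
  refine Set.disjoint_left.mp (hP h1 h2 hne) (hg2 p1) ?_
  rw [he]; exact hg2 p2

lemma leaf_eq {l a b : V} (hl : IsLeaf G l) (h1 : G.Adj l a) (h2 : G.Adj l b) : a = b := by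
  obtain ⟨u, -, hu⟩ := hl
  rw [hu a h1, hu b h2]

lemma exists_other_nbr {y d : V} (hadj : G.Adj y d) (hnl : ¬ IsLeaf G y) :
    ∃ e, G.Adj y e ∧ e ≠ d := by
  by_contra h
  push_neg at h
  exact hnl ⟨d, hadj, fun e he => h e he⟩

lemma leaf_not_in_S {S : Set V} (hS : IsSupportChoice G S) {s l : V} (hs : s ∈ S)
    (hadj : G.Adj s l) (hl : IsLeaf G l) : l ∉ S := by
  intro hlS
  obtain ⟨u, hu, hul⟩ := hS.1 l hlS
  have heq : u = s := leaf_eq hl hu hadj.symm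
  rw [heq] at hul
  exact (hS.2.2 s l hadj hl hul).mp hs hlS

lemma minDom_isPacking [Fintype V] (hiso : NoIsolated G)
    (heq : totalDomNum G = 2 * domNum G)
    {D : Set V} (hD : IsDomSet G D) (hcard : D.ncard = domNum G) : IsPacking G D := by
  classical
  by_contra hnp
  unfold IsPacking Set.Pairwise at hnp
  push_neg at hnp
  obtain ⟨u, huD, v, hvD, hne, hdisj⟩ := hnp
  obtain ⟨c, hcu, hcv⟩ := Set.not_disjoint_iff.mp hdisj
  choose nb hnb using hiso
  have hbuild : ∃ f : V → V, (∀ y ∈ D, y ≠ u → G.Adj (f y) y) ∧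
      (∃ t, (t ∈ D ∨ ∃ y ∈ D \ {u}, f y = t) ∧ G.Adj t u) := by
    by_cases hadj : G.Adj u v
    · refine ⟨fun x => if x = v then u else nb x, ?_, v, Or.inl hvD, hadj.symm⟩
      intro y hyD hyu
      by_cases hyv : y = v
      · subst hyv; simp only [if_pos rfl]; exact hadj
      · simp only [if_neg hyv]; exact (hnb y).symm
    · have hcu' : G.Adj u c := by
        rcases mem_cnbr.mp hcu with h | h
        · exfalso; subst h
          rcases mem_cnbr.mp hcv with h2 | h2
          · exact hne h2
          · exact hadj h2.symm
        · exact h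
      have hcv' : G.Adj v c := by
        rcases mem_cnbr.mp hcv with h | h
        · exfalso; subst h
          rcases mem_cnbr.mp hcu with h2 | h2
          · exact hne h2.symm
          · exact hadj h2
        · exact h
      refine ⟨fun x => if x = u ∨ x = v then c else nb x, ?_, c, ?_, hcu'.symm⟩
      · intro y hyD hyu
        by_cases hyv : y = u ∨ y = v
        · simp only [if_pos hyv]
          rcases hyv with h | h
          · exact absurd h hyu
          · exact h ▸ hcv'.symm
        · simp only [if_neg hyv]; exact (hnb y).symm
      · refine Or.inr ⟨v, ⟨hvD, hne.symm⟩, ?_⟩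
        simp
  obtain ⟨f, hf1, t, ht, htu⟩ := hbuild
  have htotal : IsTotalDomSet G (D ∪ f '' (D \ {u})) := by
    intro y
    obtain ⟨w, hwD, hw⟩ := exists_dominator hD y
    rcases mem_cnbr.mp hw with rfl | hady
    · by_cases hyu : y = u
      · subst hyu
        rcases ht with ht | ⟨y', hy', hfy'⟩
        · exact ⟨t, Or.inl ht, htu⟩
        · exact ⟨t, Or.inr ⟨y', hy', hfy'⟩, htu⟩
      · exact ⟨f y, Or.inr ⟨y, ⟨hwD, hyu⟩, rfl⟩, hf1 y hwD hyu⟩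
    · exact ⟨w, Or.inl hwD, hady⟩
  have hTle : (D ∪ f '' (D \ {u})).ncard ≤ D.ncard + (D \ {u}).ncard := by
    have h1 := Set.ncard_union_le D (f '' (D \ {u}))
    have h2 : (f '' (D \ {u})).ncard ≤ (D \ {u}).ncard :=
      Set.ncard_image_le (Set.toFinite _)
    omega
  have h1 : (D \ {u}).ncard = D.ncard - 1 := Set.ncard_diff_singleton_of_mem huD
  have h2 : 1 ≤ D.ncard := (Set.ncard_pos (Set.toFinite _)).mpr ⟨u, huD⟩
  have h3 := totalDomNum_le htotal
  omega

lemma exists_minDom_superset [Fintype V] {S : Set V} (hS : IsSupportChoice G S) :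
    ∃ D : Set V, IsDomSet G D ∧ D.ncard = domNum G ∧ S ⊆ D := by
  classical
  obtain ⟨D, hD, hcard⟩ := exists_minDomSet G
  set B : Set V := {v | v ∈ D ∧ v ∉ S ∧ IsLeaf G v ∧ ∃ s ∈ S, G.Adj v s} with hB
  have hdom : IsDomSet G ((D \ B) ∪ S) := by
    intro y hy
    have hyS : y ∉ S := fun h => hy (Or.inr h)
    have hyDB : y ∉ D \ B := fun h => hy (Or.inl h)
    by_cases hyD : y ∈ D
    · have hyB : y ∈ B := by by_contra h; exact hyDB ⟨hyD, h⟩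
      obtain ⟨-, -, hleaf, s, hsS, hadj⟩ := hyB
      exact ⟨s, Or.inr hsS, hadj.symm⟩
    · obtain ⟨w, hwD, hw⟩ := hD y hyD
      have hwB : w ∉ B := by
        intro hwB
        obtain ⟨-, -, hleaf, s, hsS, hadj⟩ := hwB
        refine hyS ?_
        rw [leaf_eq hleaf hw hadj]
        exact hsS
      exact ⟨w, Or.inl ⟨hwD, hwB⟩, hw⟩
  have hBD : B ⊆ D := fun v hv => hv.1
  have hSD : ∀ s : V, ∃ l, s ∈ S \ D → (l ∈ B ∧ G.Adj l s ∧ IsLeaf G l) := by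
    intro s
    by_cases hs : s ∈ S \ D
    · obtain ⟨l, hadj, hleaf⟩ := hS.1 s hs.1
      have hlD : l ∈ D := by
        by_contra hlD
        obtain ⟨w, hwD, hw⟩ := hD l hlD
        have : w = s := leaf_eq hleaf hw.symm hadj.symm
        exact hs.2 (this ▸ hwD)
      have hlS : l ∉ S := leaf_not_in_S hS hs.1 hadj hleaf
      exact ⟨l, fun _ => ⟨⟨hlD, hlS, hleaf, s, hs.1, hadj.symm⟩, hadj.symm, hleaf⟩⟩
    · exact ⟨s, fun h => absurd h hs⟩
  choose lf hlf using hSD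
  have hinj : (S \ D).ncard ≤ B.ncard := by
    refine Set.ncard_le_ncard_of_injOn lf (fun s hs => (hlf s hs).1) ?_ B.toFinite
    intro s1 h1 s2 h2 he
    refine leaf_eq (hlf s1 h1).2.2 (hlf s1 h1).2.1 ?_
    rw [he]; exact (hlf s2 h2).2.1
  have h1 : ((D \ B) ∪ S) ⊆ (D \ B) ∪ (S \ D) := by
    intro x hx
    rcases hx with hx | hx
    · exact Or.inl hx
    · by_cases hxD : x ∈ D
      · exact Or.inl ⟨hxD, fun hxB => hxB.2.1 hx⟩
      · exact Or.inr ⟨hx, hxD⟩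
  have h2 := Set.ncard_le_ncard h1 (Set.toFinite _)
  have h3 := Set.ncard_union_le (D \ B) (S \ D)
  have h4 : (D \ B).ncard = D.ncard - B.ncard := Set.ncard_diff hBD
  have h5 : B.ncard ≤ D.ncard := Set.ncard_le_ncard hBD
  have h6 : domNum G ≤ ((D \ B) ∪ S).ncard := domNum_le hdom
  exact ⟨(D \ B) ∪ S, hdom, by omega, fun s hs => Or.inr hs⟩

lemma key [Fintype V] (hiso : NoIsolated G) (hC3 : Free (cycleGraph 3) G)
    (hC6 : Free (cycleGraph 6) G) {D : Set V} (hD : IsDomSet G D) (hpack : IsPacking G D)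
    {d : V} (hd : d ∈ D) (hns : ¬ IsSupport G d) :
    ∃ T : Set V, IsTotalDomSet G T ∧ T.ncard + 1 ≤ 2 * D.ncard := by
  classical
  choose nb hnb using hiso
  have hdis : ∀ v ∈ D, v ≠ d → ∀ x, x ∈ cnbr G d → x ∈ cnbr G v → False := by
    intro v hv hvne x h1 h2
    exact Set.disjoint_left.mp (hpack hd hv (Ne.symm hvne)) h1 h2
  have hz : ∀ v : V, ∃ z, v ∈ D → v ≠ d →
      (G.Adj v z ∧ ∀ w, G.Adj d w → (∃ e, G.Adj w e ∧ G.Adj v e) → G.Adj z w) := by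
    intro v
    by_cases hv : v ∈ D ∧ v ≠ d
    case neg => exact ⟨v, fun h1 h2 => absurd ⟨h1, h2⟩ hv⟩
    obtain ⟨hvD, hvd⟩ := hv
    obtain ⟨z, hzN, hzmax⟩ := Set.exists_max_image (G.neighborSet v)
        (fun z => {w | G.Adj d w ∧ G.Adj z w}.ncard) (Set.toFinite _) ⟨nb v, hnb v⟩
    rw [SimpleGraph.mem_neighborSet] at hzN
    refine ⟨z, fun _ _ => ⟨hzN, ?_⟩⟩
    intro w hdw hex
    by_contra hzw
    obtain ⟨z', hwz', hvz'⟩ := hex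
    have hzz' : z ≠ z' := by rintro rfl; exact hzw hwz'.symm
    by_cases hsub : {w' | G.Adj d w' ∧ G.Adj z w'} ⊆ {w' | G.Adj d w' ∧ G.Adj z' w'}
    · have hss : {w' | G.Adj d w' ∧ G.Adj z w'} ⊂ {w' | G.Adj d w' ∧ G.Adj z' w'} :=
        ⟨hsub, fun hsub2 => hzw (hsub2 ⟨hdw, hwz'.symm⟩).2⟩
      have hlt := Set.ncard_lt_ncard hss (Set.toFinite _)
      have hle := hzmax z' hvz'
      omega
    · obtain ⟨w2, hw2, hw2'⟩ := Set.not_subset.mp hsub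
      obtain ⟨hdw2, hzw2⟩ := hw2
      have hz'w2 : ¬G.Adj z' w2 := fun h => hw2' ⟨hdw2, h⟩
      refine c6Free hC6 (x0 := d) (x1 := w2) (x2 := z) (x3 := v) (x4 := z') (x5 := w)
        hdw2 hzw2.symm hzN.symm hvz' hwz'.symm hdw.symm
        ?_ ?_ ?_ ?_ ?_ ?_ ?_ ?_ ?_ ?_ ?_ ?_ ?_ ?_ ?_ ?_ ?_ ?_
      · exact fun h => hdis v hvD hvd z (mem_cnbr_of_adj h) (mem_cnbr_of_adj hzN)
      · exact fun h => hdis v hvD hvd v (mem_cnbr_of_adj h) (self_mem_cnbr G v)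
      · exact fun h => hdis v hvD hvd z' (mem_cnbr_of_adj h) (mem_cnbr_of_adj hvz')
      · exact fun h => hdis v hvD hvd w2 (mem_cnbr_of_adj hdw2) (mem_cnbr_of_adj h.symm)
      · exact fun h => hz'w2 h.symm
      · exact fun h => triFree hC3 hdw2 h hdw
      · exact fun h => triFree hC3 hzN h hvz'
      · exact hzw
      · exact fun h => hdis v hvD hvd w (mem_cnbr_of_adj hdw) (mem_cnbr_of_adj h)
      · intro h
        refine hdis v hvD hvd z ?_ (mem_cnbr_of_adj hzN)
        rw [← h]; exact self_mem_cnbr G d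
      · exact Ne.symm hvd
      · intro h
        refine hdis v hvD hvd z' ?_ (mem_cnbr_of_adj hvz')
        rw [← h]; exact self_mem_cnbr G d
      · intro h
        refine hdis v hvD hvd w2 (mem_cnbr_of_adj hdw2) ?_
        rw [h]; exact self_mem_cnbr G v
      · intro h
        refine hdis v hvD hvd w2 (mem_cnbr_of_adj hdw2) ?_
        rw [h]; exact mem_cnbr_of_adj hvz'
      · intro h; exact hzw (h ▸ hzw2)
      · exact hzz'
      · intro h
        refine hdis v hvD hvd w (mem_cnbr_of_adj hdw) ?_
        rw [← h]; exact mem_cnbr_of_adj hzN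
      · intro h
        refine hdis v hvD hvd w (mem_cnbr_of_adj hdw) ?_
        rw [← h]; exact self_mem_cnbr G v
  choose zf hzf using hz
  refine ⟨(D \ {d}) ∪ (zf '' (D \ {d})) ∪ {nb d}, ?_, ?_⟩
  · intro y
    obtain ⟨v, hvD, hv⟩ := exists_dominator hD y
    by_cases hvd : v = d
    · rw [hvd] at hv
      rcases mem_cnbr.mp hv with hyd | hady
      · refine ⟨nb d, Or.inr rfl, ?_⟩
        rw [hyd]; exact (hnb d).symm
      · have hyl : ¬ IsLeaf G y := fun hl => hns ⟨y, hady, hl⟩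
        obtain ⟨e, hye, hed⟩ := exists_other_nbr hady.symm hyl
        obtain ⟨v', hv'D, hv'⟩ := exists_dominator hD e
        by_cases hv'd : v' = d
        · rw [hv'd] at hv'
          rcases mem_cnbr.mp hv' with hede | hade
          · exact absurd hede hed
          · exact (triFree hC3 hady hye hade).elim
        · rcases mem_cnbr.mp hv' with he | hade'
          · exact ⟨v', Or.inl (Or.inl ⟨hv'D, hv'd⟩), (he ▸ hye).symm⟩
          · exact ⟨zf v', Or.inl (Or.inr ⟨v', ⟨hv'D, hv'd⟩, rfl⟩),
              (hzf v' hv'D hv'd).2 y hady ⟨e, hye, hade'⟩⟩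
    · rcases mem_cnbr.mp hv with hyv | hady
      · refine ⟨zf v, Or.inl (Or.inr ⟨v, ⟨hvD, hvd⟩, rfl⟩), ?_⟩
        rw [hyv]; exact ((hzf v hvD hvd).1).symm
      · exact ⟨v, Or.inl (Or.inl ⟨hvD, hvd⟩), hady⟩
  · have c1 := Set.ncard_union_le ((D \ {d}) ∪ (zf '' (D \ {d}))) ({nb d} : Set V)
    have c2 := Set.ncard_union_le (D \ {d}) (zf '' (D \ {d}))
    have c3 : (zf '' (D \ {d})).ncard ≤ (D \ {d}).ncard :=
      Set.ncard_image_le (Set.toFinite _)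
    have c4 : (D \ {d}).ncard = D.ncard - 1 := Set.ncard_diff_singleton_of_mem hd
    have c5 : 1 ≤ D.ncard := (Set.ncard_pos (Set.toFinite _)).mpr ⟨d, hd⟩
    have c6 : ({nb d} : Set V).ncard = 1 := Set.ncard_singleton _
    omega

end Aux

/-- For a `(C₃,C₆)`-free graph `G` with no isolated vertices: `γₜ(G) = 2γ(G)` iff `sup(G)`
is both a packing and a dominating set of `G`. -/
theorem stmt2 {V : Type*} [Fintype V] (G : SimpleGraph V) (hiso : NoIsolated G)
    (hC3 : Free (cycleGraph 3) G) (hC6 : Free (cycleGraph 6) G)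
    (S : Set V) (hS : IsSupportChoice G S) :
    totalDomNum G = 2 * domNum G ↔ IsPacking G S ∧ IsDomSet G S := by
  classical
  constructor
  · intro heq
    obtain ⟨D, hDdom, hDcard, hSD⟩ := exists_minDom_superset hS
    have hpack : IsPacking G D := minDom_isPacking hiso heq hDdom hDcard
    have hSpack : IsPacking G S := hpack.mono hSD
    refine ⟨hSpack, ?_⟩
    intro x hxS
    by_contra hno
    push_neg at hno
    obtain ⟨d, hdD, hdx⟩ := exists_dominator hDdom x
    have hdS : d ∉ S := by
      intro hdS
      rcases mem_cnbr.mp hdx with rfl | hadj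
      · exact hxS hdS
      · exact hno d hdS hadj
    have hdns : ¬ IsSupport G d := by
      rintro ⟨l, hadj, hleaf⟩
      by_cases hdl : IsLeaf G d
      · have hlS : l ∈ S := by
          by_contra hlS
          exact hdS ((hS.2.2 d l hadj hleaf hdl).mpr hlS)
        rcases mem_cnbr.mp hdx with rfl | hadj2
        · exact hno l hlS hadj.symm
        · refine hxS ?_
          rw [leaf_eq hdl hadj2 hadj]
          exact hlS
      · exact hdS (hS.2.1 d ⟨l, hadj, hleaf⟩ hdl)
    obtain ⟨T, hT, hTcard⟩ := key hiso hC3 hC6 hDdom hpack hdD hdns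
    have h1 := totalDomNum_le hT
    omega
  · rintro ⟨hpack, hdom⟩
    have hlf0 : ∀ s : V, ∃ l, s ∈ S → (G.Adj s l ∧ IsLeaf G l) := by
      intro s
      by_cases hs : s ∈ S
      · obtain ⟨l, h1, h2⟩ := hS.1 s hs
        exact ⟨l, fun _ => ⟨h1, h2⟩⟩
      · exact ⟨s, fun h => absurd h hs⟩
    choose lf hlf using hlf0
    have hiso2 := hiso
    choose nb hnb using hiso2
    obtain ⟨D0, hD0, hD0card⟩ := exists_minDomSet G
    have hg : domNum G = S.ncard := by
      refine le_antisymm (domNum_le hdom) ?_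
      rw [← hD0card]
      exact packing_le_dom hpack hD0
    have hup : totalDomNum G ≤ 2 * S.ncard := by
      have htot : IsTotalDomSet G (S ∪ nb '' S) := by
        intro y
        by_cases hy : y ∈ S
        · exact ⟨nb y, Or.inr ⟨y, hy, rfl⟩, (hnb y).symm⟩
        · obtain ⟨s, hsS, hs⟩ := hdom y hy
          exact ⟨s, Or.inl hsS, hs⟩
      have h0 := totalDomNum_le htot
      have h1 := Set.ncard_union_le S (nb '' S)
      have h2 : (nb '' S).ncard ≤ S.ncard := Set.ncard_image_le (Set.toFinite _)
      omega
    have hlow : 2 * S.ncard ≤ totalDomNum G := by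
      refine le_totalDomNum hiso ?_
      intro T hT
      have hsub : S ⊆ T := by
        intro s hs
        obtain ⟨t, htT, hts⟩ := hT (lf s)
        have : t = s := leaf_eq (hlf s hs).2 hts.symm (hlf s hs).1.symm
        exact this ▸ htT
      have hts : ∀ s : V, ∃ t, s ∈ S → (t ∈ T ∧ G.Adj s t) := by
        intro s
        obtain ⟨t, htT, hts⟩ := hT s
        exact ⟨t, fun _ => ⟨htT, hts.symm⟩⟩
      choose tf htf using hts
      have htfS : ∀ s ∈ S, tf s ∉ S := by
        intro s hs htS
        exact Set.disjoint_left.mp (hpack hs htS ((htf s hs).2).ne)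
          (mem_cnbr_of_adj (htf s hs).2) (self_mem_cnbr G (tf s))
      have hinj : Set.InjOn tf S := by
        intro s1 h1 s2 h2 he
        by_contra hne
        refine Set.disjoint_left.mp (hpack h1 h2 hne)
          (mem_cnbr_of_adj (htf s1 h1).2) ?_
        rw [he]; exact mem_cnbr_of_adj (htf s2 h2).2
      have hsub2 : S ∪ tf '' S ⊆ T := by
        rintro x (hx | ⟨s, hs, rfl⟩)
        · exact hsub hx
        · exact (htf s hs).1
      have hdisj : Disjoint S (tf '' S) := by
        rw [Set.disjoint_right]
        rintro x ⟨s, hs, rfl⟩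
        exact htfS s hs
      have e1 : (S ∪ tf '' S).ncard = S.ncard + (tf '' S).ncard :=
        Set.ncard_union_eq hdisj (Set.toFinite _) (Set.toFinite _)
      have e2 : (tf '' S).ncard = S.ncard := Set.ncard_image_of_injOn hinj
      have e3 := Set.ncard_le_ncard hsub2 (Set.toFinite _)
      omega
    omega


end TotalDom
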